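/- For the example target distribution q_{X₁X₂Y} (with X₁=(X₁₁,X₁₂) a pair of independent uniform bits, X₂=B uniform on {1,2} independent of X₁, and Y=X_{1B}), cribbing strictly improves the feasible channel-resource entropies: (i) there exists a pmf with the cribbing factorization p(x₁)p(x₂)p(u₂,x̃₂|x₂)p(u₁,x̃₁|x₁,x̃₂)p(y|u₁,u₂,x̃₁,x̃₂) on finite alphabets whose (X₁,X₂,Y)-marginal equals q(x₁,x₂,y) and which satisfies H(X̃₁) = 1 (in bits); whereas (ii) every pmf with the non-cribbing factorization p(x₁)p(x₂)p(u₁,x̃₁|x₁)p(u₂,x̃₂|x₂)p(y|u₁,u₂,x̃₁,x̃₂) on finite alphabets whose (X₁,X₂,Y)-marginal equals q(x₁,x₂,y) satisfies H(U₁,X̃₁) ≥ I(U₁,X̃₁;X₁) ≥ 2 (in bits). -/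

import Mathlib

open scoped BigOperators

noncomputable section

/-- `p` is a probability mass function on the finite type `α`. -/
def IsPMF {α : Type*} [Fintype α] (p : α → ℝ) : Prop :=
  (∀ a, 0 ≤ p a) ∧ ∑ a, p a = 1

/-- `k` is a stochastic kernel from `α` to the finite type `β`. -/
def IsKernel {α β : Type*} [Fintype β] (k : α → β → ℝ) : Prop :=
  ∀ a, (∀ b, 0 ≤ k a b) ∧ ∑ b, k a b = 1

/-- Distribution (pushforward pmf) of the random variable `X` under the pmf `μ`. -/
def rvDist {Ω α : Type*} [Fintype Ω] [DecidableEq α] (μ : Ω → ℝ) (X : Ω → α) : α → ℝ :=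
  fun a => ∑ ω, if X ω = a then μ ω else 0

/-- Shannon entropy in bits of a pmf on a finite type. -/
def entBits {α : Type*} [Fintype α] (p : α → ℝ) : ℝ :=
  (∑ a, Real.negMulLog (p a)) / Real.log 2

/-- Entropy (in bits) of a random variable `X` under the pmf `μ`. -/
def Hb {Ω α : Type*} [Fintype Ω] [Fintype α] [DecidableEq α] (μ : Ω → ℝ) (X : Ω → α) : ℝ :=
  entBits (rvDist μ X)

/-- Conditional entropy (in bits) `H(X | Z)`. -/
def condHb {Ω α γ : Type*} [Fintype Ω] [Fintype α] [Fintype γ] [DecidableEq α] [DecidableEq γ]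
    (μ : Ω → ℝ) (X : Ω → α) (Z : Ω → γ) : ℝ :=
  Hb μ (fun ω => (X ω, Z ω)) - Hb μ Z

/-- Mutual information (in bits) `I(X; Y)`. -/
def Ib {Ω α β : Type*} [Fintype Ω] [Fintype α] [Fintype β] [DecidableEq α] [DecidableEq β]
    (μ : Ω → ℝ) (X : Ω → α) (Y : Ω → β) : ℝ :=
  Hb μ X + Hb μ Y - Hb μ (fun ω => (X ω, Y ω))

/-- Conditional mutual information (in bits) `I(X; Y | Z)`. -/
def condIb {Ω α β γ : Type*} [Fintype Ω] [Fintype α] [Fintype β] [Fintype γ]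
    [DecidableEq α] [DecidableEq β] [DecidableEq γ]
    (μ : Ω → ℝ) (X : Ω → α) (Y : Ω → β) (Z : Ω → γ) : ℝ :=
  Hb μ (fun ω => (X ω, Z ω)) + Hb μ (fun ω => (Y ω, Z ω))
    - Hb μ (fun ω => (X ω, Y ω, Z ω)) - Hb μ Z

/- The example target distribution: `X₁ = (X₁₁, X₁₂)` a pair of independent uniform bits,
`X₂ = B` uniform on `{1, 2}` (encoded as `Bool`, `false ↦ 1`, `true ↦ 2`) independent of
`X₁`, and `Y = X_{1B}` the `B`-th component of `X₁`. -/

/-- Selection of the `B`-th component of `x₁ = (x₁₁, x₁₂)`. -/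
def selB (b : Bool) (a : Bool × Bool) : Bool := if b then a.2 else a.1

/-- The example target pmf `q_{X₁X₂Y}` on `(Bool × Bool) × Bool × Bool`. -/
def qEx : (Bool × Bool) × Bool × Bool → ℝ :=
  fun z => if z.2.2 = selB z.2.1 z.1 then (8 : ℝ)⁻¹ else 0

/- Projections of a 7-tuple sample space `Ω = 𝒳₁ × 𝒳₂ × 𝒰₁ × 𝒰₂ × 𝒳̃₁ × 𝒳̃₂ × 𝒴`. -/
section Proj7
variable {A B C D E F G : Type*}
def pj1 (ω : A × B × C × D × E × F × G) : A := ω.1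
def pj2 (ω : A × B × C × D × E × F × G) : B := ω.2.1
def pj3 (ω : A × B × C × D × E × F × G) : C := ω.2.2.1
def pj4 (ω : A × B × C × D × E × F × G) : D := ω.2.2.2.1
def pj5 (ω : A × B × C × D × E × F × G) : E := ω.2.2.2.2.1
def pj6 (ω : A × B × C × D × E × F × G) : F := ω.2.2.2.2.2.1
def pj7 (ω : A × B × C × D × E × F × G) : G := ω.2.2.2.2.2.2
end Proj7

set_option maxHeartbeats 1000000

-- ===== auxiliary lemmas =====

lemma sum_ite_const {α : Type*} [Fintype α] (c : Prop) [Decidable c] (f : α → ℝ) :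
    ∑ x, (if c then f x else 0) = if c then ∑ x, f x else 0 := by
  split <;> simp

lemma sum_negMulLog_eq_of_unique {α : Type*} [Fintype α] (r : α → ℝ)
    (h1 : ∀ a b, r a ≠ 0 → r b ≠ 0 → a = b) :
    ∑ a, Real.negMulLog (r a) = Real.negMulLog (∑ a, r a) := by
  by_cases h : ∃ a, r a ≠ 0
  · obtain ⟨a0, ha0⟩ := h
    have hz : ∀ b ∈ Finset.univ, b ≠ a0 → r b = 0 := by
      intro b _ hb; by_contra hb'; exact hb (h1 b a0 hb' ha0)
    rw [Finset.sum_eq_single a0 (fun b hb hne => by rw [hz b hb hne, Real.negMulLog_zero]),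
      Finset.sum_eq_single a0 hz]
    · intro h'; exact absurd (Finset.mem_univ a0) h'
    · intro h'; exact absurd (Finset.mem_univ a0) h'
  · push_neg at h
    simp [h, Real.negMulLog_zero]

lemma negMulLog_ge (p q : ℝ) (hp : 0 ≤ p) (hpq : p ≤ q) :
    -(p * Real.log q) ≤ Real.negMulLog p := by
  rcases eq_or_lt_of_le hp with h | h
  · simp [← h, Real.negMulLog_zero]
  · rw [Real.negMulLog, neg_mul]
    have := Real.log_le_log h hpq
    nlinarith

lemma sum_negMulLog_marg {A B : Type*} [Fintype A] [Fintype B] (r : A × B → ℝ)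
    (hr : ∀ p, 0 ≤ r p) :
    ∑ b, Real.negMulLog (∑ a, r (a, b)) ≤ ∑ p, Real.negMulLog (r p) := by
  rw [Fintype.sum_prod_type_right]
  apply Finset.sum_le_sum
  intro b _
  have hs : ∀ a, r (a, b) ≤ ∑ a', r (a', b) := by
    intro a
    exact Finset.single_le_sum (fun a' _ => hr (a', b)) (Finset.mem_univ a)
  calc Real.negMulLog (∑ a, r (a, b))
      = ∑ a, -(r (a, b) * Real.log (∑ a', r (a', b))) := by
        rw [Real.negMulLog, neg_mul, Finset.sum_mul, ← Finset.sum_neg_distrib]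
    _ ≤ ∑ a, Real.negMulLog (r (a, b)) :=
        Finset.sum_le_sum fun a _ => negMulLog_ge _ _ (hr _) (hs a)

lemma rvDist_marg_fst {Ω α β : Type*} [Fintype Ω] [Fintype β] [DecidableEq α] [DecidableEq β]
    (μ : Ω → ℝ) (X : Ω → α) (Z : Ω → β) (a : α) :
    rvDist μ X a = ∑ b, rvDist μ (fun ω => (X ω, Z ω)) (a, b) := by
  unfold rvDist
  rw [Finset.sum_comm]
  apply Finset.sum_congr rfl
  intro ω _
  by_cases h : X ω = a <;> simp [Prod.ext_iff, h]

lemma rvDist_marg_snd {Ω α β : Type*} [Fintype Ω] [Fintype α] [DecidableEq α] [DecidableEq β]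
    (μ : Ω → ℝ) (X : Ω → α) (Z : Ω → β) (b : β) :
    rvDist μ Z b = ∑ a, rvDist μ (fun ω => (X ω, Z ω)) (a, b) := by
  unfold rvDist
  rw [Finset.sum_comm]
  apply Finset.sum_congr rfl
  intro ω _
  by_cases h : Z ω = b <;> simp [Prod.ext_iff, h]

lemma rvDist_nonneg {Ω α : Type*} [Fintype Ω] [DecidableEq α]
    (μ : Ω → ℝ) (hμ : ∀ ω, 0 ≤ μ ω) (X : Ω → α) (a : α) : 0 ≤ rvDist μ X a := by
  apply Finset.sum_nonneg
  intro ω _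
  split <;> simp [hμ ω]

lemma sum_prod_split {U1 U2 Xt1 Xt2 : Type*} [Fintype U1] [Fintype U2] [Fintype Xt1]
    [Fintype Xt2] (A : U1 × Xt1 → ℝ) (B : U2 × Xt2 → ℝ) :
    ∑ g : U1 × U2 × Xt1 × Xt2, A (g.1, g.2.2.1) * B (g.2.1, g.2.2.2)
      = (∑ p, A p) * (∑ p, B p) := by
  simp only [Fintype.sum_prod_type]
  rw [Finset.sum_mul_sum]
  refine Finset.sum_congr rfl fun u1 _ => ?_
  refine Finset.sum_congr rfl fun u2 _ => ?_
  rw [Finset.sum_mul_sum]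


-- explicit construction
def eBF : Bool → Fin 2 := fun b => if b then 1 else 0
def dFB : Fin 2 → Bool := fun i => decide (i = 1)
def pX1c : Bool × Bool → ℝ := fun _ => (4 : ℝ)⁻¹
def pX2c : Bool → ℝ := fun _ => (2 : ℝ)⁻¹
def k2c : Bool → Fin 1 × Fin 2 → ℝ := fun x2 p => if p.2 = eBF x2 then 1 else 0
def k1c : (Bool × Bool) × Fin 2 → Fin 1 × Fin 2 → ℝ :=
  fun q p => if p.2 = eBF (selB (dFB q.2) q.1) then 1 else 0
def kYc : Fin 1 × Fin 1 × Fin 2 × Fin 2 → Bool → ℝ :=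
  fun g y => if y = dFB g.2.2.1 then 1 else 0
def μc : (Bool × Bool) × Bool × Fin 1 × Fin 1 × Fin 2 × Fin 2 × Bool → ℝ :=
  fun ω => pX1c ω.1 * pX2c ω.2.1 * k2c ω.2.1 (ω.2.2.2.1, ω.2.2.2.2.2.1) *
    k1c (ω.1, ω.2.2.2.2.2.1) (ω.2.2.1, ω.2.2.2.2.1) *
    kYc (ω.2.2.1, ω.2.2.2.1, ω.2.2.2.2.1, ω.2.2.2.2.2.1) ω.2.2.2.2.2.2

lemma margc : ∀ z, rvDist μc (fun ω => (pj1 ω, pj2 ω, pj7 ω)) z = qEx z := by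
  intro z
  rcases z with ⟨⟨a, b⟩, c, d⟩
  cases a <;> cases b <;> cases c <;> cases d <;>
    simp [rvDist, μc, pX1c, pX2c, k2c, k1c, kYc, eBF, dFB, selB, qEx,
      Fintype.sum_prod_type, Fin.sum_univ_two, Fin.sum_univ_one, pj1, pj2, pj7] <;>
    norm_num

lemma Hbc : Hb μc pj5 = 1 := by
  have h : rvDist μc pj5 = fun a => (2:ℝ)⁻¹ := by
    funext a
    fin_cases a <;>
      simp [rvDist, μc, pX1c, pX2c, k2c, k1c, kYc, eBF, dFB, selB,
        Fintype.sum_prod_type, Fin.sum_univ_two, Fin.sum_univ_one, pj5] <;> norm_num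
  rw [Hb, h, entBits]
  simp [Fin.sum_univ_two, Real.negMulLog, Real.log_inv]
  norm_num

lemma pmfc : IsPMF pX1c ∧ IsPMF pX2c ∧ IsKernel k2c ∧ IsKernel k1c ∧ IsKernel kYc := by
  refine ⟨⟨fun a => by norm_num [pX1c], by simp [pX1c]⟩,
    ⟨fun a => by norm_num [pX2c], by simp [pX2c]⟩, ?_, ?_, ?_⟩
  · intro a
    refine ⟨fun b => by unfold k2c; split <;> norm_num, ?_⟩
    rw [Fintype.sum_prod_type]
    rw [Fin.sum_univ_one, Fin.sum_univ_two]
    cases a <;> norm_num [k2c, eBF]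
  · intro a
    refine ⟨fun b => by unfold k1c; split <;> norm_num, ?_⟩
    rw [Fintype.sum_prod_type]
    rw [Fin.sum_univ_one, Fin.sum_univ_two]
    cases h : selB (dFB a.2) a.1 <;> norm_num [k1c, eBF, h]
  · intro a
    refine ⟨fun b => by unfold kYc; split <;> norm_num, ?_⟩
    rw [Fintype.sum_bool]
    cases h : dFB a.2.2.1 <;> norm_num [kYc, h]

theorem part2 (U1 U2 Xt1 Xt2 : Type)
    (fU1 : Fintype U1) (fU2 : Fintype U2) (fXt1 : Fintype Xt1) (fXt2 : Fintype Xt2)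
    (dU1 : DecidableEq U1) (dU2 : DecidableEq U2) (dXt1 : DecidableEq Xt1)
    (dXt2 : DecidableEq Xt2)
    (μ : (Bool × Bool) × Bool × U1 × U2 × Xt1 × Xt2 × Bool → ℝ)
    (pX1 : Bool × Bool → ℝ) (pX2 : Bool → ℝ)
    (k1 : Bool × Bool → U1 × Xt1 → ℝ) (k2 : Bool → U2 × Xt2 → ℝ)
    (kY : U1 × U2 × Xt1 × Xt2 → Bool → ℝ)
    (hp1 : IsPMF pX1) (hp2 : IsPMF pX2) (hk1 : IsKernel k1) (hk2 : IsKernel k2)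
    (hkY : IsKernel kY)
    (hfact : ∀ x1 x2 u1 u2 xt1 xt2 y,
      μ (x1, x2, u1, u2, xt1, xt2, y) =
        pX1 x1 * pX2 x2 * k1 x1 (u1, xt1) * k2 x2 (u2, xt2) * kY (u1, u2, xt1, xt2) y)
    (hq : ∀ z, rvDist μ (fun ω => (pj1 ω, pj2 ω, pj7 ω)) z = qEx z) :
    Hb μ (fun ω => (pj3 ω, pj5 ω)) ≥ Ib μ (fun ω => (pj3 ω, pj5 ω)) pj1 ∧
      Ib μ (fun ω => (pj3 ω, pj5 ω)) pj1 ≥ 2 := by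
  have hkYs : ∀ g, ∑ y, kY g y = 1 := fun g => (hkY g).2
  have hk2s : ∀ x2, ∑ p : U2 × Xt2, k2 x2 p = 1 := fun x2 => (hk2 x2).2
  have hk1s : ∀ x1, ∑ p : U1 × Xt1, k1 x1 p = 1 := fun x1 => (hk1 x1).2
  have hlog2 : (0:ℝ) < Real.log 2 := Real.log_pos one_lt_two
  have hμ0 : ∀ ω, 0 ≤ μ ω := by
    rintro ⟨x1, x2, u1, u2, xt1, xt2, y⟩
    rw [hfact]
    exact mul_nonneg (mul_nonneg (mul_nonneg (mul_nonneg (hp1.1 _) (hp2.1 _))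
      ((hk1 _).1 _)) ((hk2 _).1 _)) ((hkY _).1 _)
  -- T : the channel part
  set T : (Bool × Bool) → Bool → Bool → ℝ := fun x1 x2 y =>
    ∑ g : U1 × U2 × Xt1 × Xt2, k1 x1 (g.1, g.2.2.1) * k2 x2 (g.2.1, g.2.2.2) * kY g y
    with hT
  -- (A) joint law of (X1, X2, Y)
  have hXXY : ∀ x1 x2 y, rvDist μ (fun ω => (pj1 ω, pj2 ω, pj7 ω)) (x1, x2, y)
      = pX1 x1 * pX2 x2 * T x1 x2 y := by
    rintro ⟨xa, xb⟩ x2 y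
    unfold rvDist
    simp only [Fintype.sum_prod_type, pj1, pj2, pj7, Prod.mk.injEq, ite_and, hfact,
      sum_ite_const, Finset.sum_ite_eq', Finset.mem_univ, if_true]
    rw [hT]
    simp only [Fintype.sum_prod_type, Finset.mul_sum]
    exact Finset.sum_congr rfl fun u1 _ => Finset.sum_congr rfl fun u2 _ =>
      Finset.sum_congr rfl fun xt1 _ => Finset.sum_congr rfl fun xt2 _ => by ring
  -- (B) T sums to one in y
  have hsumT : ∀ x1 x2, ∑ y, T x1 x2 y = 1 := by
    intro x1 x2
    rw [hT]
    rw [Finset.sum_comm]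
    simp only [← Finset.mul_sum, hkYs, mul_one]
    rw [sum_prod_split, hk1s, hk2s, mul_one]
  -- (C) the (X1,X2) marginal
  have h8 : ∀ x1 x2, pX1 x1 * pX2 x2 = 8⁻¹ := by
    intro x1 x2
    have : ∑ y, rvDist μ (fun ω => (pj1 ω, pj2 ω, pj7 ω)) (x1, x2, y)
        = ∑ y, qEx (x1, x2, y) := Finset.sum_congr rfl fun y _ => hq _
    rw [Fintype.sum_bool, hXXY, hXXY, Fintype.sum_bool] at this
    have hTsum : T x1 x2 true + T x1 x2 false = 1 := by
      have := hsumT x1 x2; rwa [Fintype.sum_bool] at this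
    have hqsum : qEx (x1, x2, true) + qEx (x1, x2, false) = 8⁻¹ := by
      cases h : selB x2 x1 <;> simp [qEx, h]
    nlinarith [this, hTsum, hqsum]
  -- (E,F) support constraint on kY
  have hterm0 : ∀ (g : U1 × U2 × Xt1 × Xt2) x1 x2 y, y ≠ selB x2 x1 →
      k1 x1 (g.1, g.2.2.1) * k2 x2 (g.2.1, g.2.2.2) * kY g y = 0 := by
    intro g x1 x2 y hy
    have hq0 : rvDist μ (fun ω => (pj1 ω, pj2 ω, pj7 ω)) (x1, x2, y) = 0 := by
      rw [hq]; simp [qEx, hy]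
    rw [hXXY, h8] at hq0
    have hT0 : T x1 x2 y = 0 := by
      have h8ne : (8:ℝ)⁻¹ ≠ 0 := by norm_num
      exact (mul_eq_zero.mp hq0).resolve_left h8ne
    rw [hT] at hT0
    refine (Finset.sum_eq_zero_iff_of_nonneg ?_).mp hT0 g (Finset.mem_univ g)
    intro g' _
    exact mul_nonneg (mul_nonneg ((hk1 _).1 _) ((hk2 _).1 _)) ((hkY _).1 _)
  -- (G) uniqueness of x1 given (u1, xt1)
  have claim : ∀ (v : U1 × Xt1) x1 x1', k1 x1 v ≠ 0 → k1 x1' v ≠ 0 → x1 = x1' := by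
    rintro ⟨vu, vx⟩ x1 x1' h1 h1'
    have hk1pos : 0 < k1 x1 (vu, vx) := lt_of_le_of_ne ((hk1 _).1 _) (Ne.symm h1)
    have hk1pos' : 0 < k1 x1' (vu, vx) := lt_of_le_of_ne ((hk1 _).1 _) (Ne.symm h1')
    have hsel : ∀ x2, selB x2 x1 = selB x2 x1' := by
      intro x2
      obtain ⟨w, hw⟩ : ∃ w, 0 < k2 x2 w := by
        by_contra h
        push_neg at h
        have h0 : ∑ p, k2 x2 p = 0 :=
          Finset.sum_eq_zero fun p _ => le_antisymm (h p) ((hk2 x2).1 p)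
        rw [hk2s] at h0; norm_num at h0
      obtain ⟨wu, wx⟩ := w
      have hY1 : kY (vu, wu, vx, wx) (!(selB x2 x1)) = 0 := by
        have h0 := hterm0 (vu, wu, vx, wx) x1 x2 (!(selB x2 x1)) (by simp)
        simp only at h0
        rcases mul_eq_zero.mp h0 with h' | h'
        · rcases mul_eq_zero.mp h' with h'' | h''
          · exact absurd h'' (ne_of_gt hk1pos)
          · exact absurd h'' (ne_of_gt hw)
        · exact h'
      have hY2 : kY (vu, wu, vx, wx) (!(selB x2 x1')) = 0 := by
        have h0 := hterm0 (vu, wu, vx, wx) x1' x2 (!(selB x2 x1')) (by simp)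
        simp only at h0
        rcases mul_eq_zero.mp h0 with h' | h'
        · rcases mul_eq_zero.mp h' with h'' | h''
          · exact absurd h'' (ne_of_gt hk1pos')
          · exact absurd h'' (ne_of_gt hw)
        · exact h'
      by_contra hne
      have hsum := hkYs (vu, wu, vx, wx)
      rw [Fintype.sum_bool] at hsum
      cases h1 : selB x2 x1 <;> cases h2 : selB x2 x1' <;>
        rw [h1] at hY1 <;> rw [h2] at hY2 <;>
        simp only [Bool.not_false, Bool.not_true] at hY1 hY2
      · exact hne (h1.trans h2.symm)
      · rw [hY1, hY2] at hsum; norm_num at hsum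
      · rw [hY1, hY2] at hsum; norm_num at hsum
      · exact hne (h1.trans h2.symm)
    have hf := hsel false
    have ht := hsel true
    simp [selB] at hf ht
    exact Prod.ext hf ht
  -- (H) law of ((U1, Xt1), X1)
  have hVX : ∀ (v : U1 × Xt1) x1,
      rvDist μ (fun ω => ((pj3 ω, pj5 ω), pj1 ω)) (v, x1) = pX1 x1 * k1 x1 v := by
    rintro ⟨vu, vx⟩ ⟨xa, xb⟩
    unfold rvDist
    simp only [Fintype.sum_prod_type, pj1, pj3, pj5, Prod.mk.injEq, ite_and, hfact,
      sum_ite_const, Finset.sum_ite_eq', Finset.mem_univ, if_true]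
    simp only [← Finset.mul_sum, hkYs, mul_one, ← Fintype.sum_prod_type, hk2s]
    have h2 := hp2.2
    rw [Fintype.sum_bool] at h2 ⊢
    ring_nf
    linear_combination (pX1 (xa, xb) * k1 (xa, xb) (vu, vx)) * h2
  -- law of X1 : uniform
  have hX1 : ∀ x1, rvDist μ pj1 x1 = 4⁻¹ := by
    intro x1
    rw [rvDist_marg_fst μ pj1 (fun ω => (pj2 ω, pj7 ω)) x1]
    have : ∀ b : Bool × Bool,
        rvDist μ (fun ω => (pj1 ω, pj2 ω, pj7 ω)) (x1, b) = qEx (x1, b) := fun b => hq _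
    rw [Fintype.sum_congr _ _ fun b => this b]
    rcases x1 with ⟨a, b⟩
    cases a <;> cases b <;> simp [qEx, selB, Fintype.sum_prod_type, Fintype.sum_bool] <;>
      norm_num
  have HbX1 : Hb μ pj1 = 2 := by
    rw [Hb, entBits]
    have : ∀ a : Bool × Bool, rvDist μ pj1 a = 4⁻¹ := hX1
    rw [Fintype.sum_congr _ _ fun a => by rw [this a]]
    simp [Fintype.sum_prod_type, Fintype.sum_bool, Real.negMulLog, Real.log_inv]
    rw [show (4:ℝ) = 2^2 by norm_num, Real.log_pow]
    field_simp
    norm_num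
  -- V = (U1, Xt1)
  have hVmarg : ∀ v : U1 × Xt1, rvDist μ (fun ω => (pj3 ω, pj5 ω)) v
      = ∑ x1, rvDist μ (fun ω => ((pj3 ω, pj5 ω), pj1 ω)) (v, x1) := by
    intro v
    exact rvDist_marg_fst μ (fun ω => (pj3 ω, pj5 ω)) pj1 v
  -- H(V, X1) = H(V)
  have HbVX_eq : Hb μ (fun ω => ((pj3 ω, pj5 ω), pj1 ω)) = Hb μ (fun ω => (pj3 ω, pj5 ω)) := by
    rw [Hb, Hb, entBits, entBits]
    congr 1
    rw [Fintype.sum_prod_type]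
    refine Finset.sum_congr rfl fun v _ => ?_
    rw [sum_negMulLog_eq_of_unique _ ?_, ← hVmarg v]
    intro a b ha hb
    rw [hVX] at ha hb
    have ha1 : k1 a v ≠ 0 := fun h => ha (by rw [h, mul_zero])
    have hb1 : k1 b v ≠ 0 := fun h => hb (by rw [h, mul_zero])
    exact claim v a b ha1 hb1
  -- H(V, X1) ≥ H(X1)
  have HbVX_ge : Hb μ (fun ω => ((pj3 ω, pj5 ω), pj1 ω)) ≥ Hb μ pj1 := by
    rw [Hb, Hb, entBits, entBits]
    apply (div_le_div_iff_of_pos_right hlog2).mpr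
    calc ∑ b, Real.negMulLog (rvDist μ pj1 b)
        = ∑ b, Real.negMulLog
            (∑ a, rvDist μ (fun ω => ((pj3 ω, pj5 ω), pj1 ω)) (a, b)) := by
          refine Finset.sum_congr rfl fun b _ => ?_
          rw [← rvDist_marg_snd μ (fun ω => (pj3 ω, pj5 ω)) pj1 b]
      _ ≤ ∑ p, Real.negMulLog (rvDist μ (fun ω => ((pj3 ω, pj5 ω), pj1 ω)) p) :=
          sum_negMulLog_marg _ (fun p => rvDist_nonneg μ hμ0 _ p)
  -- conclude
  have hIb : Ib μ (fun ω => (pj3 ω, pj5 ω)) pj1 = 2 := by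
    rw [Ib, HbVX_eq, HbX1]
    ring
  constructor
  · rw [hIb, ← HbVX_eq]
    exact le_trans (by rw [HbX1]) HbVX_ge
  · rw [hIb]

/-- **Cribbing strictly helps for the example.**
(i) With cribbing, there is a pmf of the cribbing form
`p(x₁)p(x₂) p(u₂,x̃₂|x₂) p(u₁,x̃₁|x₁,x̃₂) p(y|u₁,u₂,x̃₁,x̃₂)` realizing the example target
with `H(X̃₁) = 1` bit; whereas (ii) every pmf of the non-cribbing form
`p(x₁)p(x₂) p(u₁,x̃₁|x₁) p(u₂,x̃₂|x₂) p(y|u₁,u₂,x̃₁,x̃₂)` realizing the example target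
has `H(U₁, X̃₁) ≥ I(U₁, X̃₁; X₁) ≥ 2` bits. -/
theorem example_cribbing_strictly_helps :
    -- (i) achievability with cribbing
    (∃ (nU1 nU2 nXt1 nXt2 : ℕ)
      (μ : (Bool × Bool) × Bool × Fin nU1 × Fin nU2 × Fin nXt1 × Fin nXt2 × Bool → ℝ)
      (pX1 : Bool × Bool → ℝ) (pX2 : Bool → ℝ)
      (k2 : Bool → Fin nU2 × Fin nXt2 → ℝ)
      (k1 : (Bool × Bool) × Fin nXt2 → Fin nU1 × Fin nXt1 → ℝ)
      (kY : Fin nU1 × Fin nU2 × Fin nXt1 × Fin nXt2 → Bool → ℝ),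
      IsPMF pX1 ∧ IsPMF pX2 ∧ IsKernel k2 ∧ IsKernel k1 ∧ IsKernel kY ∧
      (∀ x1 x2 u1 u2 xt1 xt2 y,
        μ (x1, x2, u1, u2, xt1, xt2, y) =
          pX1 x1 * pX2 x2 * k2 x2 (u2, xt2) * k1 (x1, xt2) (u1, xt1) *
            kY (u1, u2, xt1, xt2) y) ∧
      (∀ z, rvDist μ (fun ω => (pj1 ω, pj2 ω, pj7 ω)) z = qEx z) ∧
      Hb μ pj5 = 1) ∧
    -- (ii) converse without cribbing
    (∀ (U1 U2 Xt1 Xt2 : Type)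
      (_ : Fintype U1) (_ : Fintype U2) (_ : Fintype Xt1) (_ : Fintype Xt2)
      (_ : DecidableEq U1) (_ : DecidableEq U2) (_ : DecidableEq Xt1) (_ : DecidableEq Xt2)
      (μ : (Bool × Bool) × Bool × U1 × U2 × Xt1 × Xt2 × Bool → ℝ)
      (pX1 : Bool × Bool → ℝ) (pX2 : Bool → ℝ)
      (k1 : Bool × Bool → U1 × Xt1 → ℝ) (k2 : Bool → U2 × Xt2 → ℝ)
      (kY : U1 × U2 × Xt1 × Xt2 → Bool → ℝ),
      IsPMF pX1 → IsPMF pX2 → IsKernel k1 → IsKernel k2 → IsKernel kY →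
      (∀ x1 x2 u1 u2 xt1 xt2 y,
        μ (x1, x2, u1, u2, xt1, xt2, y) =
          pX1 x1 * pX2 x2 * k1 x1 (u1, xt1) * k2 x2 (u2, xt2) * kY (u1, u2, xt1, xt2) y) →
      (∀ z, rvDist μ (fun ω => (pj1 ω, pj2 ω, pj7 ω)) z = qEx z) →
      Hb μ (fun ω => (pj3 ω, pj5 ω)) ≥ Ib μ (fun ω => (pj3 ω, pj5 ω)) pj1 ∧
        Ib μ (fun ω => (pj3 ω, pj5 ω)) pj1 ≥ 2) := by
  constructor
  · refine ⟨1, 1, 2, 2, μc, pX1c, pX2c, k2c, k1c, kYc,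
      pmfc.1, pmfc.2.1, pmfc.2.2.1, pmfc.2.2.2.1, pmfc.2.2.2.2,
      fun _ _ _ _ _ _ _ => rfl, margc, Hbc⟩
  · exact part2
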